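/- Unitary form of Proposition 2: let M be a complex 2×2 matrix with Tr(M·Mᴴ) = 1 whose Gram matrix M·Mᴴ has eigenvalues s and 1−s with 0 < s < 1, and let n ≥ 1. If there exist unitary 2ⁿ×2ⁿ complex matrices U and V and a complex 2^{n−1}×2^{n−1} matrix Z such that U · M^{⊗n} · Vᵀ = ((√2)⁻¹ · 1₂) ⊗ Z (after the canonical reindexing identifying the iterated product index type with Fin 2ⁿ and Fin 2 × Fin 2^{n−1} with Fin 2ⁿ), then s = 1/2. Equivalently: no number of copies of a non-maximally entangled two-qubit pure state (whose matrix form is M) can be mapped by local unitaries to the maximally entangled two-qubit state in tensor with any residual bipartite pure state. -/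

import Mathlib

open Matrix Kronecker Polynomial

/-- The `n`-fold Kronecker power of a square matrix `A`, indexed by `Fin n → m`
(the entry at `(i, j)` is `∏ k, A (i k) (j k)`, which is exactly the iterated
Kronecker product `A ⊗ A ⊗ ⋯ ⊗ A` under the canonical identification of the
index types). -/
noncomputable def kronPow {m : Type*} [Fintype m] (A : Matrix m m ℂ) (n : ℕ) :
    Matrix (Fin n → m) (Fin n → m) ℂ :=
  fun i j => ∏ k, A (i k) (j k)

section helpers

set_option linter.unusedSectionVars false

variable {m : Type*} [Fintype m] [DecidableEq m]

lemma kronPow_mul (A B : Matrix m m ℂ) (n : ℕ) :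
    kronPow A n * kronPow B n = kronPow (A * B) n := by
  ext i j
  simp only [kronPow, Matrix.mul_apply, ← Finset.prod_mul_distrib]
  rw [Fintype.prod_sum]

lemma kronPow_conjTranspose (A : Matrix m m ℂ) (n : ℕ) :
    (kronPow A n)ᴴ = kronPow Aᴴ n := by
  ext i j
  simp [kronPow, conjTranspose_apply, map_prod]

lemma kronPow_one (n : ℕ) : kronPow (1 : Matrix m m ℂ) n = 1 := by
  ext i j
  rcases eq_or_ne i j with rfl | hij
  · simp [kronPow, one_apply]
  · obtain ⟨l, hl⟩ := Function.ne_iff.mp hij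
    rw [one_apply_ne hij]
    exact Finset.prod_eq_zero (Finset.mem_univ l) (one_apply_ne hl)

lemma kronPow_diagonal (d : m → ℂ) (n : ℕ) :
    kronPow (diagonal d) n = diagonal (fun i => ∏ l, d (i l)) := by
  ext i j
  rcases eq_or_ne i j with rfl | hij
  · simp [kronPow]
  · obtain ⟨l, hl⟩ := Function.ne_iff.mp hij
    rw [diagonal_apply_ne _ hij]
    exact Finset.prod_eq_zero (Finset.mem_univ l) (diagonal_apply_ne _ hl)

end helpers

section charpolyHelpers

variable {n : Type*} [Fintype n] [DecidableEq n] {R : Type*} [CommRing R]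

lemma my_charpoly_diagonal (d : n → R) :
    (diagonal d).charpoly = ∏ i, (X - C (d i)) := by
  have : charmatrix (diagonal d) = diagonal (fun i => X - C (d i)) := by
    ext i j
    rcases eq_or_ne i j with rfl | hij
    · simp [charmatrix_apply]
    · simp [charmatrix_apply, diagonal_apply_ne _ hij, hij]
  rw [Matrix.charpoly, this, det_diagonal]

lemma my_charpoly_blockDiagonal {k : Type*} [Fintype k] [DecidableEq k]
    (f : k → Matrix n n R) :
    (blockDiagonal f).charpoly = ∏ c, (f c).charpoly := by
  have : charmatrix (blockDiagonal f) = blockDiagonal (fun c => charmatrix (f c)) := by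
    ext ⟨i, c⟩ ⟨j, c'⟩
    rcases eq_or_ne c c' with rfl | hcc
    · rcases eq_or_ne i j with rfl | hij
      · simp [charmatrix_apply, blockDiagonal_apply_eq]
      · simp [charmatrix_apply, blockDiagonal_apply_eq, diagonal_apply_ne, hij,
          Prod.ext_iff]
    · have h1 : (⟨i, c⟩ : n × k) ≠ ⟨j, c'⟩ := by simp [Prod.ext_iff, hcc]
      simp [charmatrix_apply, blockDiagonal_apply_ne _ _ _ hcc, diagonal_apply_ne _ h1]
  rw [Matrix.charpoly, this, det_blockDiagonal]
  rfl

lemma my_charpoly_conj [StarRing R] (U A : Matrix n n R) (hU : U * Uᴴ = 1) :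
    (U * A * Uᴴ).charpoly = A.charpoly := by
  have hmap : ∀ (B C : Matrix n n R), ((B * C).map (Polynomial.C : R →+* R[X])) =
      B.map (Polynomial.C : R →+* R[X]) * C.map (Polynomial.C : R →+* R[X]) := fun B C =>
    Matrix.map_mul
  have hone : ((1 : Matrix n n R).map (Polynomial.C : R →+* R[X])) = 1 := Matrix.map_one _
    (map_zero _) (map_one _)
  have hscal : U.map (Polynomial.C : R →+* R[X]) * Matrix.scalar n (X : R[X]) *
      Uᴴ.map (Polynomial.C : R →+* R[X]) = Matrix.scalar n (X : R[X]) := by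
    rw [← Matrix.scalar_commute (X : R[X]) (fun r => Commute.all _ _), mul_assoc, ← hmap, hU,
      hone, mul_one]
  have key : charmatrix (U * A * Uᴴ) =
      U.map (Polynomial.C : R →+* R[X]) * charmatrix A * Uᴴ.map (Polynomial.C : R →+* R[X]) := by
    rw [charmatrix, charmatrix, RingHom.mapMatrix_apply, RingHom.mapMatrix_apply, hmap, hmap,
      mul_sub, sub_mul, hscal]
  have hdet1 : (U.map (Polynomial.C : R →+* R[X])).det * (Uᴴ.map (Polynomial.C : R →+* R[X])).det
      = 1 := by
    rw [← det_mul, ← hmap, hU, hone, det_one]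
  rw [Matrix.charpoly, Matrix.charpoly, key, det_mul, det_mul, mul_comm, ← mul_assoc, mul_comm
    ((Uᴴ.map (Polynomial.C : R →+* R[X])).det), hdet1, one_mul]

lemma my_reindex_mul {p : Type*} [Fintype p] [DecidableEq p] (e : n ≃ p)
    (A B : Matrix n n R) :
    reindex e e A * reindex e e B = reindex e e (A * B) := by
  simp [reindex_apply, submatrix_mul_equiv]

end charpolyHelpers

lemma my_kronecker_conjTranspose {l m p q : Type*} (A : Matrix l m ℂ) (B : Matrix p q ℂ) :
    (A ⊗ₖ B)ᴴ = Aᴴ ⊗ₖ Bᴴ := by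
  ext ⟨i, a⟩ ⟨j, b⟩
  simp [conjTranspose_apply, kroneckerMap_apply, mul_comm]

lemma no_sq {ι : Type*} [Fintype ι] [DecidableEq ι] (μ : ι → ℂ) (i₀ : ι)
    (hne : ∀ i, i ≠ i₀ → μ i ≠ μ i₀) (q : ℂ[X])
    (hq : ∏ i, (X - C (μ i)) = q * q) : False := by
  set c := μ i₀ with hc
  set r : ℂ[X] := ∏ i ∈ Finset.univ.erase i₀, (X - C (μ i)) with hr
  have hp : ∏ i, (X - C (μ i)) = (X - C c) * r := by
    rw [hr, ← Finset.mul_prod_erase _ _ (Finset.mem_univ i₀)]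
  have hrc : r.eval c ≠ 0 := by
    rw [hr, Polynomial.eval_prod]
    refine Finset.prod_ne_zero_iff.mpr fun i hi => ?_
    simp only [eval_sub, eval_X, eval_C]
    exact sub_ne_zero.mpr fun hh => hne i (Finset.ne_of_mem_erase hi) hh.symm
  have hq0 : q.eval c = 0 := by
    have := congrArg (Polynomial.eval c) hq
    rw [hp] at this
    simp only [eval_mul, eval_sub, eval_X, eval_C, sub_self, zero_mul] at this
    exact mul_self_eq_zero.mp this.symm
  obtain ⟨q₁, hq₁⟩ := Polynomial.dvd_iff_isRoot.mpr hq0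
  have h2 : (X - C c) * r = (X - C c) * ((X - C c) * (q₁ * q₁)) := by
    rw [← hp, hq, hq₁]; ring
  have hre : r = (X - C c) * (q₁ * q₁) :=
    mul_left_cancel₀ (Polynomial.X_sub_C_ne_zero c) h2
  rw [hre] at hrc
  simp at hrc

/-- Unitary form of Proposition 2: if `M` is the matrix of a two-qubit pure state
(`Tr(M·Mᴴ) = 1`) whose Gram matrix `M·Mᴴ` has eigenvalues `s` and `1−s` with
`0 < s < 1`, and for some `n ≥ 1` there are `2ⁿ×2ⁿ` unitaries `U, V` and a matrix `Z`
with `U · M^{⊗n} · Vᵀ = ((√2)⁻¹·1₂) ⊗ Z` (under the canonical reindexings), then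
`s = 1/2`. -/
theorem unitary_prop2 (s : ℝ) (hs0 : 0 < s) (hs1 : s < 1)
    (M : Matrix (Fin 2) (Fin 2) ℂ)
    (htr : (M * Mᴴ).trace = 1)
    (hev : (M * Mᴴ).charpoly = (X - C (s : ℂ)) * (X - C (1 - (s : ℂ))))
    (n : ℕ) (hn : 1 ≤ n)
    (h : ∃ (U V : Matrix (Fin (2 ^ n)) (Fin (2 ^ n)) ℂ)
           (Z : Matrix (Fin (2 ^ (n - 1))) (Fin (2 ^ (n - 1))) ℂ),
        U * Uᴴ = 1 ∧ V * Vᴴ = 1 ∧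
        U * (Matrix.reindex finFunctionFinEquiv finFunctionFinEquiv (kronPow M n)) * Vᵀ =
          Matrix.reindex
            (finProdFinEquiv.trans (finCongr (by rw [← pow_succ', Nat.sub_add_cancel hn])))
            (finProdFinEquiv.trans (finCongr (by rw [← pow_succ', Nat.sub_add_cancel hn])))
            ((((Real.sqrt 2 : ℂ))⁻¹ • (1 : Matrix (Fin 2) (Fin 2) ℂ)) ⊗ₖ Z)) :
    s = 1 / 2 := by
  by_contra hs
  obtain ⟨U, V, Z, hU, hV, heq⟩ := h
  set G := M * Mᴴ with hGdef
  have hG : G.IsHermitian := isHermitian_mul_conjTranspose_self M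
  set v : Fin 2 → ℝ := hG.eigenvalues with hv
  set P : Matrix (Fin 2) (Fin 2) ℂ := (hG.eigenvectorUnitary : Matrix (Fin 2) (Fin 2) ℂ)
    with hPdef
  have hP : P * Pᴴ = 1 := by
    rw [← star_eq_conjTranspose]
    exact (Matrix.mem_unitaryGroup_iff).mp hG.eigenvectorUnitary.2
  set D : Matrix (Fin 2) (Fin 2) ℂ := diagonal (fun j => ((v j : ℝ) : ℂ)) with hDdef
  have hspec : G = P * D * Pᴴ := by
    have := hG.spectral_theorem
    rw [Unitary.conjStarAlgAut_apply] at this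
    rw [← star_eq_conjTranspose] at hP ⊢
    exact this
  -- charpoly of D
  have hD : D.charpoly = (X - C (s : ℂ)) * (X - C (1 - (s : ℂ))) := by
    rw [← hev, hGdef]
    rw [show M * Mᴴ = P * D * Pᴴ from hspec]
    rw [my_charpoly_conj P D hP]
  have hDfact : (X - C ((v 0 : ℝ) : ℂ)) * (X - C ((v 1 : ℝ) : ℂ))
      = (X - C (s : ℂ)) * (X - C (1 - (s : ℂ))) := by
    rw [← hD, hDdef, my_charpoly_diagonal, Fin.prod_univ_two]
  -- values of the eigenvalues
  have hcases : (v 0 = s ∧ v 1 = 1 - s) ∨ (v 0 = 1 - s ∧ v 1 = s) := by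
    have h0 : ((v 0 : ℝ) : ℂ) = s ∨ ((v 0 : ℝ) : ℂ) = 1 - s := by
      have := congrArg (Polynomial.eval ((v 0 : ℝ) : ℂ)) hDfact
      simp only [eval_mul, eval_sub, eval_X, eval_C, sub_self, zero_mul] at this
      rcases mul_eq_zero.mp this.symm with h' | h'
      · exact Or.inl (by linear_combination h')
      · exact Or.inr (by linear_combination h')
    rcases h0 with h0 | h0
    · left
      have hcancel : (X - C ((v 1 : ℝ) : ℂ)) = (X - C (1 - (s : ℂ))) := by
        apply mul_left_cancel₀ (Polynomial.X_sub_C_ne_zero ((s : ℝ) : ℂ))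
        rw [← hDfact, h0]
      have := congrArg (Polynomial.eval (0 : ℂ)) hcancel
      simp only [eval_sub, eval_X, eval_C, zero_sub, neg_inj] at this
      constructor
      · exact_mod_cast h0
      · exact_mod_cast this
    · right
      have hcancel : (X - C ((v 1 : ℝ) : ℂ)) = (X - C ((s : ℝ) : ℂ)) := by
        apply mul_left_cancel₀ (Polynomial.X_sub_C_ne_zero ((1 : ℂ) - (s : ℂ)))
        rw [h0] at hDfact
        rw [hDfact]
        ring
      have := congrArg (Polynomial.eval (0 : ℂ)) hcancel
      simp only [eval_sub, eval_X, eval_C, zero_sub, neg_inj] at this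
      constructor
      · exact_mod_cast h0
      · exact_mod_cast this
  have hvpos : ∀ j, 0 < v j := by
    intro j
    fin_cases j <;> rcases hcases with ⟨h1, h2⟩ | ⟨h1, h2⟩ <;> simp [h1, h2] <;> linarith
  have hvne : v 0 ≠ v 1 := by
    have hs' : s ≠ 1 - s := fun hh => hs (by linarith)
    rcases hcases with ⟨h1, h2⟩ | ⟨h1, h2⟩ <;> rw [h1, h2] <;>
      · intro hh; exact hs' (by linarith)
  -- the dominant index
  set j₀ : Fin 2 := if v 1 < v 0 then 0 else 1 with hj₀
  have hdom : ∀ j, j ≠ j₀ → v j < v j₀ := by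
    intro j hj
    rcases lt_or_gt_of_ne hvne with hlt | hlt
    · have : j₀ = 1 := by rw [hj₀, if_neg (not_lt.mpr hlt.le)]
      rw [this] at hj ⊢
      have : j = 0 := by omega
      rw [this]; exact hlt
    · have : j₀ = 0 := by rw [hj₀, if_pos hlt]
      rw [this] at hj ⊢
      have : j = 1 := by omega
      rw [this]; exact hlt
  -- Gram matrix computation, left side
  set e := (finFunctionFinEquiv : (Fin n → Fin 2) ≃ Fin (2 ^ n)) with he
  set R := Matrix.reindex e e (kronPow M n) with hR
  set W := U * R * Vᵀ with hW
  have hVt : Vᵀ * (Vᵀ)ᴴ = 1 := by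
    have h1 : (Vᵀ)ᴴ = (Vᴴ)ᵀ := by
      ext i j; simp [conjTranspose_apply, transpose_apply]
    have h2 : Vᴴ * V = 1 := mul_eq_one_comm.mp hV
    rw [h1, ← transpose_mul, h2, transpose_one]
  have hWW : W * Wᴴ = U * Matrix.reindex e e (kronPow G n) * Uᴴ := by
    rw [hW]
    rw [conjTranspose_mul, conjTranspose_mul]
    have : U * R * Vᵀ * ((Vᵀ)ᴴ * (Rᴴ * Uᴴ)) = U * (R * Rᴴ) * Uᴴ := by
      rw [show U * R * Vᵀ * ((Vᵀ)ᴴ * (Rᴴ * Uᴴ)) = U * (R * (Vᵀ * (Vᵀ)ᴴ) * Rᴴ) * Uᴴ by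
        noncomm_ring, hVt, mul_one]
    rw [this]
    congr 1
    congr 1
    rw [hR, conjTranspose_reindex, my_reindex_mul, kronPow_conjTranspose, kronPow_mul]
  have hPn : kronPow P n * (kronPow P n)ᴴ = 1 := by
    rw [kronPow_conjTranspose, kronPow_mul, hP, kronPow_one]
  have hcharL : (W * Wᴴ).charpoly
      = ∏ i : Fin n → Fin 2, (X - C (((∏ l, v (i l) : ℝ)) : ℂ)) := by
    rw [hWW, my_charpoly_conj U _ hU, Matrix.charpoly_reindex]
    have : kronPow G n = kronPow P n * kronPow D n * (kronPow P n)ᴴ := by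
      rw [kronPow_conjTranspose, kronPow_mul, kronPow_mul, ← hspec]
    rw [this, my_charpoly_conj _ _ hPn, hDdef, kronPow_diagonal, my_charpoly_diagonal]
    congr 1
    ext i
    push_cast
    rfl
  -- Gram matrix, right side
  set c : ℂ := ((Real.sqrt 2 : ℂ))⁻¹ with hc
  set f := (finProdFinEquiv.trans (finCongr (by rw [← pow_succ', Nat.sub_add_cancel hn]) :
      Fin (2 * 2 ^ (n-1)) ≃ Fin (2 ^ n))) with hf
  set K := (c • (1 : Matrix (Fin 2) (Fin 2) ℂ)) ⊗ₖ Z with hK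
  have hcc : c * star c = (2 : ℂ)⁻¹ := by
    rw [hc]
    have h2 : (Real.sqrt 2 : ℂ) * (Real.sqrt 2 : ℂ) = 2 := by
      rw [← Complex.ofReal_mul, Real.mul_self_sqrt (by norm_num)]
      norm_num
    rw [star_inv₀, Complex.star_def, Complex.conj_ofReal, ← mul_inv, h2]
  have hKK : K * Kᴴ = (1 : Matrix (Fin 2) (Fin 2) ℂ) ⊗ₖ ((2 : ℂ)⁻¹ • (Z * Zᴴ)) := by
    rw [hK, my_kronecker_conjTranspose, conjTranspose_smul, conjTranspose_one,
      ← mul_kronecker_mul, smul_mul_smul_comm, one_mul, hcc, smul_kronecker,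
      ← kronecker_smul]
  have hcharR : (W * Wᴴ).charpoly =
      ((2 : ℂ)⁻¹ • (Z * Zᴴ)).charpoly * ((2 : ℂ)⁻¹ • (Z * Zᴴ)).charpoly := by
    have hWf : W = Matrix.reindex f f K := heq
    have : W * Wᴴ = Matrix.reindex f f (K * Kᴴ) := by
      rw [hWf, conjTranspose_reindex, my_reindex_mul]
    rw [this, Matrix.charpoly_reindex, hKK, one_kronecker, Matrix.charpoly_reindex,
      my_charpoly_blockDiagonal, Fin.prod_univ_two]
  -- contradiction
  apply no_sq (fun i : Fin n → Fin 2 => (((∏ l, v (i l) : ℝ)) : ℂ)) (fun _ => j₀) _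
    ((2 : ℂ)⁻¹ • (Z * Zᴴ)).charpoly (by rw [← hcharL, hcharR])
  intro i hi
  have hexists : ∃ l : Fin n, i l ≠ j₀ := by
    by_contra hcon
    push_neg at hcon
    exact hi (funext hcon)
  have hlt : (∏ l, v (i l)) < ∏ l : Fin n, v j₀ := by
    apply Finset.prod_lt_prod
    · intro l _; exact hvpos _
    · intro l _
      rcases eq_or_ne (i l) j₀ with hh | hh
      · rw [hh]
      · exact (hdom _ hh).le
    · obtain ⟨l, hl⟩ := hexists
      exact ⟨l, Finset.mem_univ l, hdom _ hl⟩
  intro hcon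
  rw [Complex.ofReal_inj] at hcon
  exact absurd hcon (ne_of_lt hlt)
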